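/- Let f = h + ḡ ∈ S_H^δ[α, β] with δ ≥ 0, α ∈ [0,1), β ∈ (0,1). Then the harmonic Bloch constant B_f = sup_{z∈𝔻} (1-|z|²)(|h'(z)| + |g'(z)|) satisfies B_f ≤ ((1+β)/((2-α)2^{δ-1})) · ((1+r₀-r₀²-r₀³)((2-α)2^{δ-1} + (1-α)r₀))/(1+βr₀), where r₀ is the unique root in (0,1) of H(r) = 2^{δ-1}(2-α)(1-β) + (1-α) - 2(2^{δ-1}(2-α)-(1-α))r - (2^{δ-1}(2-α)(3+β)+(1-α)(3-β))r² - (2^δ(2-α)β+(1-α)(4+2β))r³ - 3(1-α)βr⁴. -/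

import Mathlib

open Complex Metric

lemma mobius_lt (b u : ℂ) (hb : ‖b‖ < 1) (hu : ‖u‖ < 1) :
    ‖b - u‖ < ‖1 - (starRingEnd ℂ) b * u‖ := by
  have hb2 : ‖b‖ ^ 2 = b.re * b.re + b.im * b.im := by
    rw [Complex.sq_norm, Complex.normSq_apply]
  have hu2 : ‖u‖ ^ 2 = u.re * u.re + u.im * u.im := by
    rw [Complex.sq_norm, Complex.normSq_apply]
  have h1 : ‖b - u‖ ^ 2 = (b.re - u.re) * (b.re - u.re) + (b.im - u.im) * (b.im - u.im) := by
    rw [Complex.sq_norm, Complex.normSq_apply]; simp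
  have h2 : ‖1 - (starRingEnd ℂ) b * u‖ ^ 2 =
      (1 - (b.re * u.re + b.im * u.im)) * (1 - (b.re * u.re + b.im * u.im)) +
      (b.re * u.im - b.im * u.re) * (b.re * u.im - b.im * u.re) := by
    rw [Complex.sq_norm, Complex.normSq_apply]
    simp [Complex.sub_re, Complex.sub_im, Complex.mul_re, Complex.mul_im]
    ring_nf
  have hb' : b.re * b.re + b.im * b.im < 1 := by nlinarith [norm_nonneg b]
  have hu' : u.re * u.re + u.im * u.im < 1 := by nlinarith [norm_nonneg u]
  have key : ‖b - u‖ ^ 2 < ‖1 - (starRingEnd ℂ) b * u‖ ^ 2 := by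
    rw [h1, h2]; nlinarith [hb', hu']
  exact lt_of_pow_lt_pow_left₀ 2 (norm_nonneg _) key

lemma mobius_le (b u : ℂ) (hb : ‖b‖ ≤ 1) (hu : ‖u‖ ≤ 1) :
    ‖b - u‖ * (1 + ‖b‖ * ‖u‖) ≤ (‖b‖ + ‖u‖) * ‖1 - (starRingEnd ℂ) b * u‖ := by
  have hb2 : ‖b‖ ^ 2 = b.re * b.re + b.im * b.im := by
    rw [Complex.sq_norm, Complex.normSq_apply]
  have hu2 : ‖u‖ ^ 2 = u.re * u.re + u.im * u.im := by
    rw [Complex.sq_norm, Complex.normSq_apply]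
  have h1 : ‖b - u‖ ^ 2 = (b.re - u.re) * (b.re - u.re) + (b.im - u.im) * (b.im - u.im) := by
    rw [Complex.sq_norm, Complex.normSq_apply]; simp
  have h2 : ‖1 - (starRingEnd ℂ) b * u‖ ^ 2 =
      (1 - (b.re * u.re + b.im * u.im)) * (1 - (b.re * u.re + b.im * u.im)) +
      (b.re * u.im - b.im * u.re) * (b.re * u.im - b.im * u.re) := by
    rw [Complex.sq_norm, Complex.normSq_apply]
    simp [Complex.sub_re, Complex.sub_im, Complex.mul_re, Complex.mul_im]
    ring_nf
  have h1' : ‖b - u‖ ^ 2 = ‖b‖ ^ 2 + ‖u‖ ^ 2 - 2 * (b.re * u.re + b.im * u.im) := by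
    rw [h1, hb2, hu2]; ring
  have h2' : ‖1 - (starRingEnd ℂ) b * u‖ ^ 2 =
      (1 - (b.re * u.re + b.im * u.im)) ^ 2 + (b.re * u.im - b.im * u.re) ^ 2 := by
    rw [h2]; ring
  have hlag : ((b.re * u.re + b.im * u.im) ^ 2 + (b.re * u.im - b.im * u.re) ^ 2) -
      ‖b‖ ^ 2 * ‖u‖ ^ 2 = 0 := by rw [hb2, hu2]; ring
  have ht : |((starRingEnd ℂ) b * u).re| ≤ ‖b‖ * ‖u‖ := by
    calc |((starRingEnd ℂ) b * u).re| ≤ ‖(starRingEnd ℂ) b * u‖ :=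
          Complex.abs_re_le_norm _
      _ = ‖b‖ * ‖u‖ := by rw [norm_mul, RCLike.norm_conj]
  have ht' : -(‖b‖ * ‖u‖) ≤ b.re * u.re + b.im * u.im := by
    have h := (abs_le.1 ht).1
    have : ((starRingEnd ℂ) b * u).re = b.re * u.re + b.im * u.im := by
      simp [Complex.mul_re, Complex.conj_re, Complex.conj_im]
    linarith [this ▸ h]
  have hnn : 0 ≤ ((b.re * u.re + b.im * u.im) + ‖b‖ * ‖u‖) * ((1 - ‖b‖ ^ 2) * (1 - ‖u‖ ^ 2)) := by
    apply mul_nonneg (by linarith)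
    apply mul_nonneg <;> nlinarith [norm_nonneg b, norm_nonneg u]
  have cert : ((‖b‖ + ‖u‖) * ‖1 - (starRingEnd ℂ) b * u‖) ^ 2 -
      (‖b - u‖ * (1 + ‖b‖ * ‖u‖)) ^ 2 =
      2 * (((b.re * u.re + b.im * u.im) + ‖b‖ * ‖u‖) * ((1 - ‖b‖ ^ 2) * (1 - ‖u‖ ^ 2))) +
      (‖b‖ + ‖u‖) ^ 2 * (((b.re * u.re + b.im * u.im) ^ 2 +
        (b.re * u.im - b.im * u.re) ^ 2) - ‖b‖ ^ 2 * ‖u‖ ^ 2) := by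
    rw [mul_pow, mul_pow, h1', h2']; ring
  rw [hlag, mul_zero, add_zero] at cert
  have hsq : (‖b - u‖ * (1 + ‖b‖ * ‖u‖)) ^ 2 ≤
      ((‖b‖ + ‖u‖) * ‖1 - (starRingEnd ℂ) b * u‖) ^ 2 := by linarith
  exact le_of_pow_le_pow_left₀ two_ne_zero (by positivity) hsq
lemma schwarz_pick (w : ℂ → ℂ) (hw : DifferentiableOn ℂ w (ball 0 1))
    (hwlt : ∀ z ∈ ball (0 : ℂ) 1, ‖w z‖ < 1) (z : ℂ) (hz : ‖z‖ < 1) :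
    ‖w z‖ ≤ (‖w 0‖ + ‖z‖) / (1 + ‖w 0‖ * ‖z‖) := by
  set b := w 0 with hbdef
  have h0 : (0 : ℂ) ∈ ball (0 : ℂ) 1 := by simp
  have hb : ‖b‖ < 1 := hwlt 0 h0
  have hz' : z ∈ ball (0 : ℂ) 1 := mem_ball_zero_iff.2 hz
  -- denominators nonzero
  have hden : ∀ u : ℂ, ‖u‖ < 1 → (1 : ℂ) - (starRingEnd ℂ) b * u ≠ 0 := by
    intro u hu h0'
    have : (1 : ℂ) = (starRingEnd ℂ) b * u := by linear_combination h0'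
    have : (1 : ℝ) = ‖(starRingEnd ℂ) b * u‖ := by rw [← this]; simp
    rw [norm_mul, RCLike.norm_conj] at this
    nlinarith [norm_nonneg b, norm_nonneg u]
  set φ : ℂ → ℂ := fun y => (b - w y) / (1 - (starRingEnd ℂ) b * w y) with hφdef
  have hφd : DifferentiableOn ℂ φ (ball 0 1) := by
    apply DifferentiableOn.div
    · exact (differentiableOn_const b).sub hw
    · exact (differentiableOn_const 1).sub ((differentiableOn_const _).mul hw)
    · intro y hy; exact hden _ (hwlt y hy)
  have hφmaps : Set.MapsTo φ (ball (0 : ℂ) 1) (ball (0 : ℂ) 1) := by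
    intro y hy
    rw [mem_ball_zero_iff]
    have hu := hwlt y hy
    have hlt := mobius_lt b (w y) hb hu
    have hpos : 0 < ‖(1 : ℂ) - (starRingEnd ℂ) b * w y‖ :=
      norm_pos_iff.2 (hden _ hu)
    rw [hφdef]
    simp only [norm_div]
    rw [div_lt_one hpos]
    exact hlt
  have hφ0 : φ 0 = 0 := by simp [hφdef, hbdef]
  have hschwarz : ‖φ z‖ ≤ ‖z‖ := by
    have := Complex.norm_le_norm_of_mapsTo_ball hφd (hφmaps.mono_right ball_subset_closedBall) hφ0 hz
    simpa using this
  -- recover w z from φ z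
  have hu := hwlt z hz'
  have hd1 : (1 : ℂ) - (starRingEnd ℂ) b * w z ≠ 0 := hden _ hu
  have hφz1 : ‖φ z‖ < 1 := lt_of_le_of_lt hschwarz hz
  have hd2 : (1 : ℂ) - (starRingEnd ℂ) b * φ z ≠ 0 := hden _ hφz1
  have hlin : φ z * (1 - (starRingEnd ℂ) b * w z) = b - w z := by
    rw [hφdef]; exact div_mul_cancel₀ _ hd1
  have hrec : b - φ z = w z * (1 - (starRingEnd ℂ) b * φ z) := by
    linear_combination (-1 : ℂ) * hlin
  have hkey := mobius_le b (φ z) hb.le hφz1.le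
  have hpos2 : 0 < ‖(1 : ℂ) - (starRingEnd ℂ) b * φ z‖ := norm_pos_iff.2 hd2
  have hwz : ‖w z‖ = ‖b - φ z‖ / ‖1 - (starRingEnd ℂ) b * φ z‖ := by
    rw [hrec, norm_mul, mul_div_assoc, div_self hpos2.ne', mul_one]
  have step1 : ‖w z‖ ≤ (‖b‖ + ‖φ z‖) / (1 + ‖b‖ * ‖φ z‖) := by
    rw [hwz, div_le_div_iff₀ hpos2 (by positivity)]
    nlinarith [hkey]
  have step2 : (‖b‖ + ‖φ z‖) / (1 + ‖b‖ * ‖φ z‖) ≤ (‖b‖ + ‖z‖) / (1 + ‖b‖ * ‖z‖) := by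
    rw [div_le_div_iff₀ (by positivity) (by positivity)]
    have hm : 0 ≤ (‖z‖ - ‖φ z‖) * (1 - ‖b‖ ^ 2) :=
      mul_nonneg (by linarith) (by nlinarith [norm_nonneg b])
    nlinarith [hm]
  exact step1.trans step2

lemma deriv_bound (α δ : ℝ) (hα0 : 0 ≤ α) (hα1 : α < 1) (hδ : 0 ≤ δ)
    (h : ℂ → ℂ) (a : ℕ → ℂ) (ha0 : a 0 = 0) (ha1 : a 1 = 1)
    (hreph : ∀ z ∈ ball (0 : ℂ) 1, HasSum (fun n : ℕ => a n * z ^ n) (h z))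
    (hsb : Summable fun n : ℕ =>
      ((n : ℝ) + 2) ^ δ * (((n : ℝ) + 2 - α) / (1 - α)) * ‖a (n + 2)‖)
    (hcoef : ∑' n : ℕ,
      ((n : ℝ) + 2) ^ δ * (((n : ℝ) + 2 - α) / (1 - α)) * ‖a (n + 2)‖ ≤ 1)
    (z : ℂ) (hz : ‖z‖ < 1) :
    ‖deriv h z‖ ≤ 1 + (1 - α) * 2 / ((2 : ℝ) ^ δ * (2 - α)) * ‖z‖ := by
  set K : ℝ := (1 - α) * 2 / ((2 : ℝ) ^ δ * (2 - α)) with hKdef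
  have h2δ : (0 : ℝ) < (2 : ℝ) ^ δ := Real.rpow_pos_of_pos (by norm_num) δ
  have hK0 : 0 ≤ K := by
    apply div_nonneg (by nlinarith) (by nlinarith)
  set wt : ℕ → ℝ := fun n => ((n : ℝ) + 2) ^ δ * (((n : ℝ) + 2 - α) / (1 - α)) * ‖a (n + 2)‖
    with hwt
  have hwt0 : ∀ n, 0 ≤ wt n := by
    intro n
    apply mul_nonneg (mul_nonneg (Real.rpow_nonneg (by positivity) δ) _) (norm_nonneg _)
    apply div_nonneg (by push_cast; linarith [Nat.cast_nonneg (α := ℝ) n]) (by linarith)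
  -- per-index bound
  have hper : ∀ n : ℕ, ((n : ℝ) + 2) * ‖a (n + 2)‖ ≤ K * wt n := by
    intro n
    have hn0 : (0 : ℝ) ≤ (n : ℝ) := Nat.cast_nonneg n
    have A1 : (2 : ℝ) ^ δ ≤ ((n : ℝ) + 2) ^ δ :=
      Real.rpow_le_rpow (by norm_num) (by linarith) hδ
    have A2 : (2 - α) * ((n : ℝ) + 2) ≤ 2 * ((n : ℝ) + 2 - α) := by nlinarith
    have A3 : (2 : ℝ) ^ δ * ((2 - α) * ((n : ℝ) + 2)) ≤
        ((n : ℝ) + 2) ^ δ * (2 * ((n : ℝ) + 2 - α)) := by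
      apply mul_le_mul A1 A2 (by nlinarith) (by positivity)
    rw [hKdef, hwt, div_mul_eq_mul_div, le_div_iff₀ (mul_pos h2δ (by linarith))]
    have h1α : (1 : ℝ) - α ≠ 0 := by linarith
    have hsub : (1 - α) * 2 * (((n : ℝ) + 2) ^ δ * ((((n : ℝ) + 2 - α)) / (1 - α)) * ‖a (n + 2)‖) =
        ((n : ℝ) + 2) ^ δ * (2 * ((n : ℝ) + 2 - α)) * ‖a (n + 2)‖ := by
      field_simp
    rw [hsub]
    have := mul_le_mul_of_nonneg_right A3 (norm_nonneg (a (n + 2)))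
    nlinarith [this]
  -- summability of the derivative bound
  have ha1n : ‖a 1‖ = 1 := by rw [ha1]; simp
  set u : ℕ → ℝ := fun n => (n : ℝ) * ‖a n‖ with hu
  have husum2 : Summable fun n : ℕ => u (n + 2) := by
    apply Summable.of_nonneg_of_le (fun n => by positivity) (fun n => ?_) (hsb.mul_left K)
    show ((n + 2 : ℕ) : ℝ) * ‖a (n + 2)‖ ≤ K * wt n
    push_cast
    exact hper n
  have husum : Summable u := by
    have := (summable_nat_add_iff 2).1 husum2
    exact this
  -- derivative of the sum
  have hball : z ∈ ball (0 : ℂ) 1 := mem_ball_zero_iff.2 hz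
  have hbound : ∀ (n : ℕ) (y : ℂ), y ∈ ball (0 : ℂ) 1 →
      ‖a n * ((n : ℂ) * y ^ (n - 1))‖ ≤ u n := by
    intro n y hy
    rw [mem_ball_zero_iff] at hy
    have heq2 : ‖a n * ((n : ℂ) * y ^ (n - 1))‖ = ‖a n‖ * ((n : ℝ) * ‖y‖ ^ (n - 1)) := by
      simp [norm_mul, norm_pow]
    rw [heq2, hu]
    have hyp : ‖y‖ ^ (n - 1) ≤ 1 := pow_le_one₀ (norm_nonneg y) hy.le
    calc ‖a n‖ * ((n : ℝ) * ‖y‖ ^ (n - 1)) ≤ ‖a n‖ * ((n : ℝ) * 1) := by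
          apply mul_le_mul_of_nonneg_left _ (norm_nonneg _)
          exact mul_le_mul_of_nonneg_left hyp (Nat.cast_nonneg n)
      _ = (n : ℝ) * ‖a n‖ := by ring
  have hsum0 : Summable fun n : ℕ => a n * (0 : ℂ) ^ n := by
    have hz0 : (fun n : ℕ => a n * (0 : ℂ) ^ n) = fun _ => (0 : ℂ) := by
      funext n
      cases n with
      | zero => simp [ha0]
      | succ m => simp
    rw [hz0]
    exact summable_zero
  have hDer : HasDerivAt (fun y : ℂ => ∑' n : ℕ, a n * y ^ n)
      (∑' n : ℕ, a n * ((n : ℂ) * z ^ (n - 1))) z :=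
    hasDerivAt_tsum_of_isPreconnected husum isOpen_ball
      (convex_ball (0 : ℂ) 1).isPreconnected
      (fun n y _ => (hasDerivAt_pow n y).const_mul (a n))
      hbound (mem_ball_self one_pos) hsum0 hball
  have heqn : (fun y : ℂ => ∑' n : ℕ, a n * y ^ n) =ᶠ[nhds z] h :=
    Filter.eventuallyEq_of_mem (isOpen_ball.mem_nhds hball) (fun y hy => (hreph y hy).tsum_eq)
  have hdh : deriv h z = ∑' n : ℕ, a n * ((n : ℂ) * z ^ (n - 1)) := by
    rw [← heqn.deriv_eq]
    exact hDer.deriv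
  -- bound the sum
  set v : ℕ → ℝ := fun n => ‖a n‖ * ((n : ℝ) * ‖z‖ ^ (n - 1)) with hv
  have hveq : ∀ n : ℕ, ‖a n * ((n : ℂ) * z ^ (n - 1))‖ = v n := by
    intro n; simp [hv, norm_mul, norm_pow]
  have hvu : ∀ n, v n ≤ u n := by
    intro n
    have hyp : ‖z‖ ^ (n - 1) ≤ 1 := pow_le_one₀ (norm_nonneg z) hz.le
    calc v n ≤ ‖a n‖ * ((n : ℝ) * 1) := by
          apply mul_le_mul_of_nonneg_left _ (norm_nonneg _)
          exact mul_le_mul_of_nonneg_left hyp (Nat.cast_nonneg n)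
      _ = u n := by rw [hu]; ring
  have hvsum : Summable v :=
    Summable.of_nonneg_of_le (fun n => by positivity) hvu husum
  have hnorm : ‖deriv h z‖ ≤ ∑' n, v n := by
    rw [hdh]
    calc ‖∑' n : ℕ, a n * ((n : ℂ) * z ^ (n - 1))‖ ≤ ∑' n, ‖a n * ((n : ℂ) * z ^ (n - 1))‖ :=
          norm_tsum_le_tsum_norm (by simpa only [hveq] using hvsum)
      _ = ∑' n, v n := tsum_congr hveq
  -- split off first two terms
  have hsplit : ∑' n, v n = v 0 + (v 1 + ∑' n, v (n + 2)) := by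
    rw [Summable.tsum_eq_zero_add hvsum, Summable.tsum_eq_zero_add ((summable_nat_add_iff 1).2 hvsum)]
  have hv0 : v 0 = 0 := by simp [hv, ha0]
  have hv1 : v 1 = 1 := by simp [hv, ha1]
  have htail : ∑' n, v (n + 2) ≤ K * ‖z‖ := by
    have hterm : ∀ n : ℕ, v (n + 2) ≤ (K * ‖z‖) * wt n := by
      intro n
      have hzp : ‖z‖ ^ (n + 2 - 1) ≤ ‖z‖ := by
        have : n + 2 - 1 = n + 1 := rfl
        rw [this, pow_succ]
        calc ‖z‖ ^ n * ‖z‖ ≤ 1 * ‖z‖ :=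
              mul_le_mul_of_nonneg_right (pow_le_one₀ (norm_nonneg z) hz.le) (norm_nonneg z)
          _ = ‖z‖ := one_mul _
      have h1 : v (n + 2) ≤ (((n : ℝ) + 2) * ‖a (n + 2)‖) * ‖z‖ := by
        rw [hv]
        push_cast
        calc ‖a (n + 2)‖ * (((n : ℝ) + 2) * ‖z‖ ^ (n + 2 - 1)) ≤
              ‖a (n + 2)‖ * (((n : ℝ) + 2) * ‖z‖) := by
              apply mul_le_mul_of_nonneg_left _ (norm_nonneg _)
              apply mul_le_mul_of_nonneg_left hzp (by positivity)
          _ = (((n : ℝ) + 2) * ‖a (n + 2)‖) * ‖z‖ := by ring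
      calc v (n + 2) ≤ (((n : ℝ) + 2) * ‖a (n + 2)‖) * ‖z‖ := h1
        _ ≤ (K * wt n) * ‖z‖ := mul_le_mul_of_nonneg_right (hper n) (norm_nonneg z)
        _ = (K * ‖z‖) * wt n := by ring
    calc ∑' n, v (n + 2) ≤ ∑' n, (K * ‖z‖) * wt n :=
          Summable.tsum_le_tsum hterm ((summable_nat_add_iff 2).2 hvsum) (hsb.mul_left _)
      _ = (K * ‖z‖) * ∑' n, wt n := tsum_mul_left
      _ ≤ (K * ‖z‖) * 1 := by
          apply mul_le_mul_of_nonneg_left hcoef (by positivity)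
      _ = K * ‖z‖ := mul_one _
  calc ‖deriv h z‖ ≤ ∑' n, v n := hnorm
    _ = v 0 + (v 1 + ∑' n, v (n + 2)) := hsplit
    _ ≤ 0 + (1 + K * ‖z‖) := by rw [hv0, hv1]; linarith [htail]
    _ = 1 + K * ‖z‖ := by ring

lemma key_poly (c D β r r₀ : ℝ) (hc : 0 ≤ c) (hcD : c ≤ D) (hβ : 0 ≤ β)
    (hr : 0 ≤ r) (hr₀ : 0 ≤ r₀)
    (hroot : D * (1 - β) + c - 2 * (D - c) * r₀ - (D * (3 + β) + c * (3 - β)) * r₀ ^ 2 -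
      (2 * D * β + c * (4 + 2 * β)) * r₀ ^ 3 - 3 * c * β * r₀ ^ 4 = 0) :
    (1 + β * r₀) * ((1 + r - r ^ 2 - r ^ 3) * (D + c * r)) ≤
      (1 + r₀ - r₀ ^ 2 - r₀ ^ 3) * (D + c * r₀) * (1 + β * r) := by
  have hQ : 0 ≤ (1 + β * r₀) * (c * r ^ 2 + (D + c + 2 * c * r₀) * r +
      ((D - c) + 2 * (D + c) * r₀ + 3 * c * r₀ ^ 2)) := by
    apply mul_nonneg (by nlinarith)
    have h1 : 0 ≤ c * r ^ 2 := by positivity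
    have h2 : 0 ≤ (D + c + 2 * c * r₀) * r := by
      apply mul_nonneg (by nlinarith) hr
    have h3 : 0 ≤ (D - c) + 2 * (D + c) * r₀ + 3 * c * r₀ ^ 2 := by nlinarith
    linarith
  have cert : (1 + r₀ - r₀ ^ 2 - r₀ ^ 3) * (D + c * r₀) * (1 + β * r) -
      (1 + β * r₀) * ((1 + r - r ^ 2 - r ^ 3) * (D + c * r)) =
      (r - r₀) ^ 2 * ((1 + β * r₀) * (c * r ^ 2 + (D + c + 2 * c * r₀) * r +
        ((D - c) + 2 * (D + c) * r₀ + 3 * c * r₀ ^ 2))) -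
      (r - r₀) * (D * (1 - β) + c - 2 * (D - c) * r₀ -
        (D * (3 + β) + c * (3 - β)) * r₀ ^ 2 -
        (2 * D * β + c * (4 + 2 * β)) * r₀ ^ 3 - 3 * c * β * r₀ ^ 4) := by
    ring
  rw [hroot, mul_zero, sub_zero] at cert
  nlinarith [mul_nonneg (sq_nonneg (r - r₀)) hQ]

set_option maxHeartbeats 1000000 in
theorem bloch_constant_bound
    (α β δ : ℝ) (hα0 : 0 ≤ α) (hα1 : α < 1) (hβ0 : 0 < β) (hβ1 : β < 1)
    (hδ : 0 ≤ δ)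
    (h g w : ℂ → ℂ) (a : ℕ → ℂ)
    (ha0 : a 0 = 0) (ha1 : a 1 = 1)
    (hreph : ∀ z ∈ ball (0 : ℂ) 1, HasSum (fun n : ℕ => a n * z ^ n) (h z))
    (hsb : Summable fun n : ℕ =>
      ((n : ℝ) + 2) ^ δ * (((n : ℝ) + 2 - α) / (1 - α)) * ‖a (n + 2)‖)
    (hcoef : ∑' n : ℕ,
      ((n : ℝ) + 2) ^ δ * (((n : ℝ) + 2 - α) / (1 - α)) * ‖a (n + 2)‖ ≤ 1)
    (hw : DifferentiableOn ℂ w (ball (0 : ℂ) 1))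
    (hwlt : ∀ z ∈ ball (0 : ℂ) 1, ‖w z‖ < 1)
    (hw0 : ‖w 0‖ = β)
    (hdil : ∀ z ∈ ball (0 : ℂ) 1, deriv g z = w z * deriv h z)
    (r₀ : ℝ) (hr₀ : r₀ ∈ Set.Ioo (0 : ℝ) 1)
    (hroot : (2 : ℝ) ^ (δ - 1) * (2 - α) * (1 - β) + (1 - α) -
        2 * ((2 : ℝ) ^ (δ - 1) * (2 - α) - (1 - α)) * r₀ -
        ((2 : ℝ) ^ (δ - 1) * (2 - α) * (3 + β) + (1 - α) * (3 - β)) * r₀ ^ 2 -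
        ((2 : ℝ) ^ δ * (2 - α) * β + (1 - α) * (4 + 2 * β)) * r₀ ^ 3 -
        3 * (1 - α) * β * r₀ ^ 4 = 0) :
    (⨆ z ∈ ball (0 : ℂ) 1,
        (1 - ‖z‖ ^ 2) * (‖deriv h z‖ + ‖deriv g z‖)) ≤
      (1 + β) / ((2 - α) * (2 : ℝ) ^ (δ - 1)) *
        ((1 + r₀ - r₀ ^ 2 - r₀ ^ 3) *
            ((2 - α) * (2 : ℝ) ^ (δ - 1) + (1 - α) * r₀) /
          (1 + β * r₀)) := by
  obtain ⟨hr₀0, hr₀1⟩ := hr₀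
  have hs0 : (0 : ℝ) < (2 : ℝ) ^ (δ - 1) := Real.rpow_pos_of_pos (by norm_num) _
  have h2δ : (2 : ℝ) ^ δ = 2 * (2 : ℝ) ^ (δ - 1) := by
    rw [Real.rpow_sub (by norm_num : (0 : ℝ) < 2), Real.rpow_one]
    ring
  have hshalf : (1 : ℝ) / 2 ≤ (2 : ℝ) ^ (δ - 1) := by
    have h1 : (2 : ℝ) ^ (-1 : ℝ) ≤ (2 : ℝ) ^ (δ - 1) :=
      Real.rpow_le_rpow_of_exponent_le (by norm_num) (by linarith)
    have h2 : (2 : ℝ) ^ (-1 : ℝ) = 1 / 2 := by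
      rw [Real.rpow_neg_one]; norm_num
    linarith [h2 ▸ h1]
  have hD0 : (0 : ℝ) < (2 - α) * (2 : ℝ) ^ (δ - 1) := mul_pos (by linarith) hs0
  have hc0 : (0 : ℝ) ≤ 1 - α := by linarith
  have hcD : (1 : ℝ) - α ≤ (2 - α) * (2 : ℝ) ^ (δ - 1) := by nlinarith
  have hroot' : ((2 - α) * (2 : ℝ) ^ (δ - 1)) * (1 - β) + (1 - α) -
      2 * ((2 - α) * (2 : ℝ) ^ (δ - 1) - (1 - α)) * r₀ -
      (((2 - α) * (2 : ℝ) ^ (δ - 1)) * (3 + β) + (1 - α) * (3 - β)) * r₀ ^ 2 -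
      (2 * ((2 - α) * (2 : ℝ) ^ (δ - 1)) * β + (1 - α) * (4 + 2 * β)) * r₀ ^ 3 -
      3 * (1 - α) * β * r₀ ^ 4 = 0 := by
    rw [h2δ] at hroot
    linarith [hroot]
  have hX0 : (0 : ℝ) ≤ 1 + r₀ - r₀ ^ 2 - r₀ ^ 3 := by nlinarith
  have hM0 : (0 : ℝ) ≤ (1 + β) / ((2 - α) * (2 : ℝ) ^ (δ - 1)) *
      ((1 + r₀ - r₀ ^ 2 - r₀ ^ 3) *
        ((2 - α) * (2 : ℝ) ^ (δ - 1) + (1 - α) * r₀) / (1 + β * r₀)) := by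
    apply mul_nonneg (div_nonneg (by linarith) hD0.le)
    apply div_nonneg (mul_nonneg hX0 (by nlinarith)) (by nlinarith)
  apply Real.iSup_le _ hM0
  intro z
  apply Real.iSup_le _ hM0
  intro hz
  have hz1 : ‖z‖ < 1 := mem_ball_zero_iff.1 hz
  have hr0 : 0 ≤ ‖z‖ := norm_nonneg z
  have hKD : (1 - α) * 2 / ((2 : ℝ) ^ δ * (2 - α)) =
      (1 - α) / ((2 - α) * (2 : ℝ) ^ (δ - 1)) := by
    rw [h2δ, div_eq_div_iff (mul_pos (mul_pos two_pos hs0) (by linarith : (0:ℝ) < 2 - α)).ne' hD0.ne']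
    ring
  have hder : ‖deriv h z‖ ≤ 1 + (1 - α) / ((2 - α) * (2 : ℝ) ^ (δ - 1)) * ‖z‖ := by
    have hdb := deriv_bound α δ hα0 hα1 hδ h a ha0 ha1 hreph hsb hcoef z hz1
    rwa [hKD] at hdb
  have hwz : ‖w z‖ ≤ (β + ‖z‖) / (1 + β * ‖z‖) := by
    have hsp := schwarz_pick w hw hwlt z hz1
    rwa [hw0] at hsp
  have hgz : ‖deriv g z‖ = ‖w z‖ * ‖deriv h z‖ := by rw [hdil z hz, norm_mul]
  have hfrac0 : (0 : ℝ) < 1 + β * ‖z‖ := by nlinarith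
  have hfrac : (0 : ℝ) ≤ (β + ‖z‖) / (1 + β * ‖z‖) := div_nonneg (by linarith) hfrac0.le
  have hsum : ‖deriv h z‖ + ‖deriv g z‖ ≤
      (1 + (1 - α) / ((2 - α) * (2 : ℝ) ^ (δ - 1)) * ‖z‖) *
        (1 + (β + ‖z‖) / (1 + β * ‖z‖)) := by
    rw [hgz]
    have h1 : ‖deriv h z‖ + ‖w z‖ * ‖deriv h z‖ = ‖deriv h z‖ * (1 + ‖w z‖) := by ring
    rw [h1]
    have hpos1 : (0 : ℝ) ≤ 1 + ‖w z‖ := by positivity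
    have hpos2 : (0 : ℝ) ≤ 1 + (1 - α) / ((2 - α) * (2 : ℝ) ^ (δ - 1)) * ‖z‖ := by
      have : (0 : ℝ) ≤ (1 - α) / ((2 - α) * (2 : ℝ) ^ (δ - 1)) := div_nonneg hc0 hD0.le
      nlinarith
    exact mul_le_mul hder (by linarith) hpos1 hpos2
  have hcr2 : (0 : ℝ) ≤ 1 - ‖z‖ ^ 2 := by nlinarith
  have step1 : (1 - ‖z‖ ^ 2) * (‖deriv h z‖ + ‖deriv g z‖) ≤
      (1 - ‖z‖ ^ 2) * ((1 + (1 - α) / ((2 - α) * (2 : ℝ) ^ (δ - 1)) * ‖z‖) *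
        (1 + (β + ‖z‖) / (1 + β * ‖z‖))) :=
    mul_le_mul_of_nonneg_left hsum hcr2
  refine step1.trans ?_
  have key := key_poly (1 - α) ((2 - α) * (2 : ℝ) ^ (δ - 1)) β ‖z‖ r₀ hc0 hcD hβ0.le hr0
    hr₀0.le hroot'
  have hfr₀ : (0 : ℝ) < 1 + β * r₀ := by nlinarith
  have hLHS : (1 - ‖z‖ ^ 2) * ((1 + (1 - α) / ((2 - α) * (2 : ℝ) ^ (δ - 1)) * ‖z‖) *
      (1 + (β + ‖z‖) / (1 + β * ‖z‖))) =
      (1 + β) * ((1 + ‖z‖ - ‖z‖ ^ 2 - ‖z‖ ^ 3) * ((2 - α) * (2 : ℝ) ^ (δ - 1) +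
        (1 - α) * ‖z‖)) / (((2 - α) * (2 : ℝ) ^ (δ - 1)) * (1 + β * ‖z‖)) := by
    have h2α : (2 : ℝ) - α ≠ 0 := by linarith
    field_simp
    ring
  have hRHS : (1 + β) / ((2 - α) * (2 : ℝ) ^ (δ - 1)) *
      ((1 + r₀ - r₀ ^ 2 - r₀ ^ 3) *
        ((2 - α) * (2 : ℝ) ^ (δ - 1) + (1 - α) * r₀) / (1 + β * r₀)) =
      (1 + β) * ((1 + r₀ - r₀ ^ 2 - r₀ ^ 3) * ((2 - α) * (2 : ℝ) ^ (δ - 1) +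
        (1 - α) * r₀)) / (((2 - α) * (2 : ℝ) ^ (δ - 1)) * (1 + β * r₀)) := by
    field_simp
  rw [hLHS, hRHS, div_le_div_iff₀ (by positivity) (by positivity)]
  have hmul := mul_le_mul_of_nonneg_left key
    (by positivity : (0 : ℝ) ≤ (1 + β) * ((2 - α) * (2 : ℝ) ^ (δ - 1)))
  calc (1 + β) * ((1 + ‖z‖ - ‖z‖ ^ 2 - ‖z‖ ^ 3) * ((2 - α) * (2 : ℝ) ^ (δ - 1) +
          (1 - α) * ‖z‖)) * (((2 - α) * (2 : ℝ) ^ (δ - 1)) * (1 + β * r₀)) =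
        (1 + β) * ((2 - α) * (2 : ℝ) ^ (δ - 1)) * ((1 + β * r₀) *
          ((1 + ‖z‖ - ‖z‖ ^ 2 - ‖z‖ ^ 3) * ((2 - α) * (2 : ℝ) ^ (δ - 1) + (1 - α) * ‖z‖))) := by
        ring
    _ ≤ (1 + β) * ((2 - α) * (2 : ℝ) ^ (δ - 1)) * ((1 + r₀ - r₀ ^ 2 - r₀ ^ 3) *
          ((2 - α) * (2 : ℝ) ^ (δ - 1) + (1 - α) * r₀) * (1 + β * ‖z‖)) := hmul
    _ = (1 + β) * ((1 + r₀ - r₀ ^ 2 - r₀ ^ 3) * ((2 - α) * (2 : ℝ) ^ (δ - 1) +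
          (1 - α) * r₀)) * (((2 - α) * (2 : ℝ) ^ (δ - 1)) * (1 + β * ‖z‖)) := by
        ring
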